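/- Pattern mixture representation: Under CCMV, the full-data law satisfies, for all l, P(L = l) = Σ_r P(L_{(-r)} = l_{(-r)} | R = 1, L_{(r)} = l_{(r)}) · P(L_{(r)} = l_{(r)} | R = r) · P(R = r), where for r = 1 the first factor is interpreted as 1 (pattern 1 observes everything). -/

import Mathlib

open Finset MeasureTheory

open Classical in
noncomputable def pr {Ω : Type*} [Fintype Ω] (P : Ω → ℝ) (E : Ω → Prop) : ℝ :=
  ∑ ω, if E ω then P ω else 0

noncomputable def cpr {Ω : Type*} [Fintype Ω] (P : Ω → ℝ) (E F : Ω → Prop) : ℝ :=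
  pr P (fun ω => E ω ∧ F ω) / pr P F

noncomputable def ex {Ω : Type*} [Fintype Ω] (P : Ω → ℝ) (U : Ω → ℝ) : ℝ :=
  ∑ ω, P ω * U ω

open Classical in
noncomputable def cex {Ω : Type*} [Fintype Ω] (P : Ω → ℝ) (U : Ω → ℝ) (F : Ω → Prop) : ℝ :=
  (∑ ω, if F ω then P ω * U ω else 0) / pr P F


section Helpers
variable {Ω : Type*} [Fintype Ω] (P : Ω → ℝ)

lemma pr_nonneg (hP : ∀ ω, 0 ≤ P ω) (E : Ω → Prop) : 0 ≤ pr P E := by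
  classical
  apply Finset.sum_nonneg
  intro ω _
  split
  · exact hP ω
  · exact le_refl _

lemma pr_congr {E F : Ω → Prop} (h : ∀ ω, E ω ↔ F ω) : pr P E = pr P F := by
  classical
  unfold pr
  exact Finset.sum_congr rfl fun ω _ => by rw [if_congr (h ω) rfl rfl]

lemma pr_mono (hP : ∀ ω, 0 ≤ P ω) {E F : Ω → Prop} (h : ∀ ω, E ω → F ω) :
    pr P E ≤ pr P F := by
  classical
  apply Finset.sum_le_sum
  intro ω _
  by_cases hE : E ω
  · rw [if_pos hE, if_pos (h ω hE)]
  · rw [if_neg hE]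
    split
    · exact hP ω
    · exact le_refl _

lemma pr_pos_elim (hP : ∀ ω, 0 ≤ P ω) {E : Ω → Prop} (h : 0 < pr P E) :
    ∃ ω, E ω ∧ 0 < P ω := by
  classical
  by_contra hc
  push_neg at hc
  have : pr P E = 0 := by
    unfold pr
    apply Finset.sum_eq_zero
    intro ω _
    by_cases hE : E ω
    · rw [if_pos hE]
      exact le_antisymm (hc ω hE) (hP ω)
    · rw [if_neg hE]
  rw [this] at h
  exact lt_irrefl 0 h

lemma pr_pos_intro {E : Ω → Prop} (hP : ∀ ω, 0 ≤ P ω) (ω : Ω) (hE : E ω) (hp : 0 < P ω) :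
    0 < pr P E := by
  classical
  have : P ω ≤ pr P E := by
    unfold pr
    have h2 := Finset.single_le_sum (f := fun ω => if E ω then P ω else 0)
      (fun ω _ => by split; exacts [hP ω, le_refl _]) (Finset.mem_univ ω)
    simp only [if_pos hE] at h2
    exact h2
  linarith

end Helpers

/-- Pattern-mixture representation under CCMV: for all `l`,
`P(L = l) = Σ_r P(L_(-r) = l_(-r) | R=1, L_(r) = l_(r)) · P(L_(r) = l_(r) | R=r) · P(R=r)`,
where for the complete-case pattern (here `r = 0`, which observes everything) the first
factor is 1 so that the `r = 0` term is `P(R=0, L=l)`. -/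
theorem stmt15 {Ω A : Type*} [Fintype Ω] {J : ℕ} {B C : Fin (J + 1) → Type*}
    (P : Ω → ℝ) (hP : ∀ ω, 0 ≤ P ω) (hPsum : ∑ ω, P ω = 1)
    (R : Ω → Fin (J + 1)) (L : Ω → A)
    (O : (r : Fin (J + 1)) → A → B r) (M : (r : Fin (J + 1)) → A → C r)
    (hpart : ∀ (r : Fin (J + 1)) (l l' : A), O r l = O r l' → M r l = M r l' → l = l')
    (hpos : ∀ l : A, 0 < pr P (fun ω => L ω = l) →
      0 < pr P (fun ω => R ω = 0 ∧ L ω = l))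
    (hCCMV : ∀ r, r ≠ 0 → ∀ (a : C r) (b : B r),
      0 < pr P (fun ω => R ω = r ∧ O r (L ω) = b) →
      0 < pr P (fun ω => R ω = 0 ∧ O r (L ω) = b) →
      cpr P (fun ω => M r (L ω) = a) (fun ω => R ω = r ∧ O r (L ω) = b) =
        cpr P (fun ω => M r (L ω) = a) (fun ω => R ω = 0 ∧ O r (L ω) = b)) :
    ∀ l : A,
      pr P (fun ω => L ω = l) =
        pr P (fun ω => R ω = 0 ∧ L ω = l) +
        ∑ r ∈ Finset.univ.erase (0 : Fin (J + 1)),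
          cpr P (fun ω => M r (L ω) = M r l)
              (fun ω => R ω = 0 ∧ O r (L ω) = O r l) *
            (cpr P (fun ω => O r (L ω) = O r l) (fun ω => R ω = r) *
              pr P (fun ω => R ω = r)) := by
  classical
  intro l
  have hdec : pr P (fun ω => L ω = l) =
      ∑ r : Fin (J + 1), pr P (fun ω => R ω = r ∧ L ω = l) := by
    unfold pr
    rw [Finset.sum_comm]
    refine Finset.sum_congr rfl fun ω _ => ?_
    by_cases h : L ω = l
    · rw [if_pos h, Finset.sum_eq_single (R ω)]
      · rw [if_pos ⟨rfl, h⟩]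
      · intro r _ hr
        rw [if_neg]
        rintro ⟨h1, _⟩
        exact hr h1.symm
      · intro hm
        exact absurd (Finset.mem_univ _) hm
    · simp only [h, and_false, if_false, Finset.sum_const_zero]
  have key : ∀ r ∈ Finset.univ.erase (0 : Fin (J + 1)),
      pr P (fun ω => R ω = r ∧ L ω = l) =
        cpr P (fun ω => M r (L ω) = M r l)
            (fun ω => R ω = 0 ∧ O r (L ω) = O r l) *
          (cpr P (fun ω => O r (L ω) = O r l) (fun ω => R ω = r) *
            pr P (fun ω => R ω = r)) := by
    intro r hr
    have hr0 : r ≠ 0 := Finset.ne_of_mem_erase hr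
    set a := M r l with ha
    set b := O r l with hb
    have hiff : ∀ ω, (R ω = r ∧ L ω = l) ↔
        (M r (L ω) = a ∧ (R ω = r ∧ O r (L ω) = b)) := by
      intro ω
      constructor
      · rintro ⟨h1, h2⟩
        exact ⟨by rw [h2], h1, by rw [h2]⟩
      · rintro ⟨hm, h1, ho⟩
        exact ⟨h1, hpart r _ _ ho hm⟩
    by_cases hpo : 0 < pr P (fun ω => R ω = r ∧ O r (L ω) = b)
    · have hpr : 0 < pr P (fun ω => R ω = r) :=
        lt_of_lt_of_le hpo (pr_mono P hP fun ω h => h.1)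
      have hOR : pr P (fun ω => O r (L ω) = b ∧ R ω = r) =
          pr P (fun ω => R ω = r ∧ O r (L ω) = b) :=
        pr_congr P fun ω => and_comm
      have hfac2 : cpr P (fun ω => O r (L ω) = b) (fun ω => R ω = r) *
          pr P (fun ω => R ω = r) = pr P (fun ω => R ω = r ∧ O r (L ω) = b) := by
        unfold cpr
        rw [hOR, div_mul_cancel₀ _ (ne_of_gt hpr)]
      -- positivity of the R=0 conditioning event
      obtain ⟨ω0, ⟨hω0r, hω0o⟩, hω0p⟩ := pr_pos_elim P hP hpo
      have hLpos : 0 < pr P (fun ω => L ω = L ω0) :=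
        pr_pos_intro P hP ω0 rfl hω0p
      have h0pos : 0 < pr P (fun ω => R ω = 0 ∧ O r (L ω) = b) := by
        refine lt_of_lt_of_le (hpos (L ω0) hLpos) (pr_mono P hP ?_)
        rintro ω ⟨h1, h2⟩
        exact ⟨h1, by rw [h2, hω0o]⟩
      have hccmv := (hCCMV r hr0 a b hpo h0pos).symm
      have hnum : pr P (fun ω => M r (L ω) = a ∧ (R ω = r ∧ O r (L ω) = b)) =
          pr P (fun ω => R ω = r ∧ L ω = l) :=
        pr_congr P fun ω => (hiff ω).symm
      rw [hfac2, hccmv]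
      unfold cpr
      rw [hnum, div_mul_cancel₀ _ (ne_of_gt hpo)]
    · have hzero : pr P (fun ω => R ω = r ∧ O r (L ω) = b) = 0 :=
        le_antisymm (not_lt.mp hpo) (pr_nonneg P hP _)
      have hL0 : pr P (fun ω => R ω = r ∧ L ω = l) = 0 := by
        refine le_antisymm ?_ (pr_nonneg P hP _)
        rw [← hzero]
        exact pr_mono P hP fun ω h => ⟨h.1, by rw [h.2]⟩
      have hfac2 : cpr P (fun ω => O r (L ω) = b) (fun ω => R ω = r) *
          pr P (fun ω => R ω = r) = 0 := by
        unfold cpr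
        have hOR : pr P (fun ω => O r (L ω) = b ∧ R ω = r) = 0 := by
          rw [← hzero]
          exact pr_congr P fun ω => and_comm
        rw [hOR, zero_div, zero_mul]
      rw [hL0, hfac2, mul_zero]
  rw [hdec, ← Finset.add_sum_erase _ _ (Finset.mem_univ (0 : Fin (J + 1)))]
  congr 1
  exact Finset.sum_congr rfl key
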